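/- Under the Setup, the log-softmax term of the loss at the true token vanishes in probability in the joint limit β̄ → 0, d → ∞: for every η > 0 and δ > 0 there exist β̄₀ > 0 and d₀ ∈ ℕ such that for all β̄ ∈ (0, β̄₀) and all d ≥ d₀, the probability that log( 1 + Σ_{i ≠ y} exp( ⟪z_t, e_i⟫ − ⟪z_t, e_y⟫ ) ) < η is greater than 1 − δ. -/

import Mathlib

open MeasureTheory ProbabilityTheory Finset

/-- Euclidean inner product on `ℝ^d` (as functions `Fin d → ℝ`). -/
noncomputable def edot {d : ℕ} (u v : Fin d → ℝ) : ℝ := ∑ j, u j * v j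

/-- The noised embedding `z_t = √(1−β̄)·z₀ + √β̄·ε`. -/
noncomputable def noised {d : ℕ} (βb : ℝ) (z0 ε : Fin d → ℝ) : Fin d → ℝ :=
  fun j => Real.sqrt (1 - βb) * z0 j + Real.sqrt βb * ε j


section Aux
open Real
open scoped NNReal ENNReal

lemma pow_le_exp_aux (n : ℕ) {t : ℝ} (ht : 0 ≤ t) : t ^ n ≤ n.factorial * Real.exp t := by
  have h := Real.sum_le_exp_of_nonneg ht (n + 1)
  have h2 : t ^ n / n.factorial ≤ ∑ i ∈ Finset.range (n+1), t ^ i / i.factorial := by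
    exact Finset.single_le_sum (f := fun i => t ^ i / (i.factorial : ℝ))
      (fun i _ => by positivity) (Finset.self_mem_range_succ n)
  have hfac : (0:ℝ) < n.factorial := by positivity
  calc t ^ n = (t ^ n / n.factorial) * n.factorial := by field_simp
    _ ≤ Real.exp t * n.factorial := by
        apply mul_le_mul_of_nonneg_right (h2.trans h) hfac.le
    _ = n.factorial * Real.exp t := by ring

lemma integrable_pow_mul_exp_neg_mul_sq (n : ℕ) {b : ℝ} (hb : 0 < b) :
    Integrable (fun x : ℝ => x ^ n * Real.exp (-b * x ^ 2)) := by
  have hb2 : 0 < b / 2 := by linarith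
  set K : ℝ := n.factorial * (2 / b) ^ n + 1 with hK
  have hK0 : (0:ℝ) < K := by positivity
  apply Integrable.mono' ((integrable_exp_neg_mul_sq hb2).const_mul K)
  · exact ((continuous_pow n).mul (Continuous.rexp (by continuity))).aestronglyMeasurable
  · filter_upwards with x
    rw [Real.norm_eq_abs, abs_mul, abs_of_nonneg (Real.exp_pos _).le, abs_pow]
    have key : |x| ^ n ≤ K * Real.exp (b / 2 * x ^ 2) := by
      rcases le_total (|x| ^ n) 1 with h | h
      · have hpos : (0:ℝ) ≤ (n.factorial : ℝ) * (2 / b) ^ n := by positivity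
        calc |x| ^ n ≤ 1 := h
          _ ≤ K * 1 := by rw [hK]; linarith
          _ ≤ K * Real.exp (b / 2 * x ^ 2) := by
              apply mul_le_mul_of_nonneg_left _ hK0.le
              rw [← Real.exp_zero]
              exact Real.exp_le_exp.mpr (by positivity)
      · have h1 : |x| ^ n ≤ (|x| ^ n) ^ 2 := le_self_pow₀ h (by norm_num)
        have h2 : (|x| ^ n) ^ 2 = (x ^ 2) ^ n := by
          rw [← abs_pow, sq_abs, ← pow_mul, ← pow_mul, mul_comm]
        have h3 : (b / 2 * x ^ 2) ^ n ≤ n.factorial * Real.exp (b / 2 * x ^ 2) :=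
          pow_le_exp_aux n (by positivity)
        have h4 : (x ^ 2) ^ n = (2 / b) ^ n * (b / 2 * x ^ 2) ^ n := by
          rw [← mul_pow]; congr 1; field_simp
        calc |x| ^ n ≤ (x ^ 2) ^ n := h1.trans_eq h2
          _ = (2 / b) ^ n * (b / 2 * x ^ 2) ^ n := h4
          _ ≤ (2 / b) ^ n * (n.factorial * Real.exp (b / 2 * x ^ 2)) := by
              apply mul_le_mul_of_nonneg_left h3 (by positivity)
          _ ≤ K * Real.exp (b / 2 * x ^ 2) := by
              rw [hK]; rw [← mul_assoc]
              apply mul_le_mul_of_nonneg_right _ (Real.exp_pos _).le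
              nlinarith [Real.exp_pos (b/2 * x^2)]
    calc |x| ^ n * Real.exp (-b * x ^ 2)
        ≤ (K * Real.exp (b / 2 * x ^ 2)) * Real.exp (-b * x ^ 2) := by
          apply mul_le_mul_of_nonneg_right key (Real.exp_pos _).le
      _ = K * Real.exp (-(b/2) * x ^ 2) := by
          rw [mul_assoc, ← Real.exp_add]; ring_nf

lemma integral_pow_succ_mul_exp_neg_mul_sq (n : ℕ) {b : ℝ} (hb : 0 < b) :
    ∫ x : ℝ, x ^ (n + 2) * Real.exp (-b * x ^ 2)
      = (n + 1) / (2 * b) * ∫ x : ℝ, x ^ n * Real.exp (-b * x ^ 2) := by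
  have hu : ∀ x : ℝ, HasDerivAt (fun x : ℝ => x ^ (n+1)) ((n+1 : ℝ) * x ^ n) x := by
    intro x
    simpa using (hasDerivAt_pow (n+1) x)
  have hv : ∀ x : ℝ, HasDerivAt (fun x : ℝ => -(1/(2*b)) * Real.exp (-b * x ^ 2))
      (x * Real.exp (-b * x ^ 2)) x := by
    intro x
    have h1 : HasDerivAt (fun x : ℝ => -b * x ^ 2) (-b * (2 * x)) x := by
      simpa using ((hasDerivAt_pow 2 x).const_mul (-b))
    have h2 := (h1.exp).const_mul (-(1/(2*b)))
    refine h2.congr_deriv ?_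
    have hbb : b * b⁻¹ = 1 := mul_inv_cancel₀ hb.ne'
    linear_combination (x * Real.exp (-b * x ^ 2)) * hbb
  have key := integral_mul_deriv_eq_deriv_mul_of_integrable (fun x _ => hu x) (fun x _ => hv x) ?_ ?_ ?_
  · have lhs_eq : ∫ x : ℝ, x ^ (n+1) * (x * Real.exp (-b * x ^ 2))
        = ∫ x : ℝ, x ^ (n + 2) * Real.exp (-b * x ^ 2) := by
      congr 1; ext x; ring
    rw [lhs_eq] at key
    rw [key, ← integral_neg, ← integral_const_mul]
    congr 1; ext a
    field_simp
  · have : (fun x : ℝ => x ^ (n+1)) * (fun x : ℝ => x * Real.exp (-b * x ^ 2))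
        = fun x : ℝ => x ^ (n+2) * Real.exp (-b * x ^ 2) := by ext x; simp; ring
    rw [this]; exact integrable_pow_mul_exp_neg_mul_sq (n+2) hb
  · have : (fun x : ℝ => (n+1 : ℝ) * x ^ n) * (fun x : ℝ => -(1/(2*b)) * Real.exp (-b * x ^ 2))
        = fun x : ℝ => (-(n+1 : ℝ)/(2*b)) * (x ^ n * Real.exp (-b * x ^ 2)) := by
      ext x; simp; ring
    rw [this]; exact (integrable_pow_mul_exp_neg_mul_sq n hb).const_mul _
  · have : (fun x : ℝ => x ^ (n+1)) * (fun x : ℝ => -(1/(2*b)) * Real.exp (-b * x ^ 2))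
        = fun x : ℝ => (-(1/(2*b))) * (x ^ (n+1) * Real.exp (-b * x ^ 2)) := by
      ext x; simp; ring
    rw [this]; exact (integrable_pow_mul_exp_neg_mul_sq (n+1) hb).const_mul _

lemma integral_odd_pow_mul_exp_neg_mul_sq (n : ℕ) (b : ℝ) (hn : Odd n) :
    ∫ x : ℝ, x ^ n * Real.exp (-b * x ^ 2) = 0 := by
  have h := integral_neg_eq_self (fun x : ℝ => x ^ n * Real.exp (-b * x ^ 2)) volume
  have h2 : ∫ x : ℝ, (-x) ^ n * Real.exp (-b * (-x) ^ 2)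
      = -∫ x : ℝ, x ^ n * Real.exp (-b * x ^ 2) := by
    rw [← integral_neg]
    congr 1; ext x
    rw [hn.neg_pow, neg_sq]
    ring
  rw [h2] at h
  linarith

namespace GaussAux
variable {v : ℝ≥0}

lemma vpos (hv : v ≠ 0) : (0:ℝ) < (v:ℝ) := by
  have := v.coe_nonneg
  rcases this.lt_or_eq with h | h
  · exact h
  · exact absurd (by exact_mod_cast h.symm) hv

lemma pdf_eq (hv : v ≠ 0) :
    gaussianPDFReal 0 v = fun x =>
      (Real.sqrt (2 * π * v))⁻¹ * Real.exp (-((2*(v:ℝ))⁻¹) * x ^ 2) := by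
  ext x
  have hv' : (0:ℝ) < v := vpos hv
  unfold gaussianPDFReal
  congr 1
  congr 1
  field_simp
  ring

lemma integral_fun_gaussianReal (hv : v ≠ 0) (g : ℝ → ℝ) :
    ∫ x, g x ∂(gaussianReal 0 v) = ∫ x, gaussianPDFReal 0 v x * g x := by
  rw [gaussianReal_of_var_ne_zero _ hv]
  have h1 : gaussianPDF 0 v
      = fun x => ((Real.toNNReal (gaussianPDFReal 0 v x) : ℝ≥0) : ℝ≥0∞) := rfl
  have hm : Measurable fun x => Real.toNNReal (gaussianPDFReal 0 v x) :=
    (measurable_gaussianPDFReal 0 v).real_toNNReal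
  rw [h1, integral_withDensity_eq_integral_smul hm g]
  congr 1; ext x
  rw [NNReal.smul_def, Real.coe_toNNReal _ (gaussianPDFReal_nonneg 0 v x)]
  simp

lemma integrable_pow_gaussianReal (hv : v ≠ 0) (k : ℕ) :
    Integrable (fun x : ℝ => x ^ k) (gaussianReal 0 v) := by
  rw [gaussianReal_of_var_ne_zero _ hv]
  have h1 : gaussianPDF 0 v
      = fun x => ((Real.toNNReal (gaussianPDFReal 0 v x) : ℝ≥0) : ℝ≥0∞) := rfl
  have hm : Measurable fun x => Real.toNNReal (gaussianPDFReal 0 v x) :=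
    (measurable_gaussianPDFReal 0 v).real_toNNReal
  rw [h1, integrable_withDensity_iff_integrable_smul hm]
  have hv' : (0:ℝ) < v := vpos hv
  have hb : (0:ℝ) < (2*(v:ℝ))⁻¹ := by positivity
  have : (fun x : ℝ => Real.toNNReal (gaussianPDFReal 0 v x) • x ^ k)
      = fun x : ℝ => (Real.sqrt (2 * π * v))⁻¹ * (x ^ k * Real.exp (-((2*(v:ℝ))⁻¹) * x ^ 2)) := by
    ext x
    rw [NNReal.smul_def, Real.coe_toNNReal _ (gaussianPDFReal_nonneg 0 v x), pdf_eq hv,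
      smul_eq_mul]
    ring
  rw [this]
  exact (integrable_pow_mul_exp_neg_mul_sq k hb).const_mul _

lemma integral_pow_gaussianReal_step (hv : v ≠ 0) (n : ℕ) :
    ∫ x, x ^ (n+2) ∂(gaussianReal 0 v)
      = ((n:ℝ)+1) * v * ∫ x, x ^ n ∂(gaussianReal 0 v) := by
  have hv' : (0:ℝ) < v := vpos hv
  have hb : (0:ℝ) < (2*(v:ℝ))⁻¹ := by positivity
  rw [integral_fun_gaussianReal hv, integral_fun_gaussianReal hv]
  simp only [pdf_eq hv]
  have key := integral_pow_succ_mul_exp_neg_mul_sq n hb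
  have h2 : ((n:ℝ) + 1) / (2 * ((2*(v:ℝ))⁻¹)) = ((n:ℝ)+1) * v := by
    field_simp
  have e1 : (fun x : ℝ => (Real.sqrt (2 * π * v))⁻¹ * Real.exp (-((2*(v:ℝ))⁻¹) * x ^ 2) * x ^ (n+2))
      = fun x : ℝ => (Real.sqrt (2 * π * v))⁻¹ * (x ^ (n+2) * Real.exp (-((2*(v:ℝ))⁻¹) * x ^ 2)) := by
    funext x; ring
  have e2 : (fun x : ℝ => (Real.sqrt (2 * π * v))⁻¹ * Real.exp (-((2*(v:ℝ))⁻¹) * x ^ 2) * x ^ n)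
      = fun x : ℝ => (Real.sqrt (2 * π * v))⁻¹ * (x ^ n * Real.exp (-((2*(v:ℝ))⁻¹) * x ^ 2)) := by
    funext x; ring
  rw [e1, e2, integral_const_mul, integral_const_mul, key, h2]
  ring

lemma integral_pow_zero_gaussianReal (hv : v ≠ 0) :
    ∫ x, x ^ 0 ∂(gaussianReal 0 v) = 1 := by
  simp

lemma integral_odd_pow_gaussianReal (hv : v ≠ 0) {n : ℕ} (hn : Odd n) :
    ∫ x, x ^ n ∂(gaussianReal 0 v) = 0 := by
  have hv' : (0:ℝ) < v := vpos hv
  have hb : (0:ℝ) < (2*(v:ℝ))⁻¹ := by positivity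
  rw [integral_fun_gaussianReal hv]
  simp only [pdf_eq hv]
  have e2 : (fun x : ℝ => (Real.sqrt (2 * π * v))⁻¹ * Real.exp (-((2*(v:ℝ))⁻¹) * x ^ 2) * x ^ n)
      = fun x : ℝ => (Real.sqrt (2 * π * v))⁻¹ * (x ^ n * Real.exp (-((2*(v:ℝ))⁻¹) * x ^ 2)) := by
    funext x; ring
  rw [e2, integral_const_mul, integral_odd_pow_mul_exp_neg_mul_sq n _ hn]
  ring

lemma gmom1 (hv : v ≠ 0) : ∫ x, x ^ 1 ∂(gaussianReal 0 v) = 0 :=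
  integral_odd_pow_gaussianReal hv (by decide)

lemma gmom3 (hv : v ≠ 0) : ∫ x, x ^ 3 ∂(gaussianReal 0 v) = 0 :=
  integral_odd_pow_gaussianReal hv (by decide)

lemma gmom2 (hv : v ≠ 0) : ∫ x, x ^ 2 ∂(gaussianReal 0 v) = v := by
  have := integral_pow_gaussianReal_step hv 0
  rw [integral_pow_zero_gaussianReal hv] at this
  simpa using this

lemma gmom4 (hv : v ≠ 0) : ∫ x, x ^ 4 ∂(gaussianReal 0 v) = 3 * (v:ℝ) ^ 2 := by
  have := integral_pow_gaussianReal_step hv 2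
  rw [gmom2 hv] at this
  rw [this]
  norm_num
  ring

end GaussAux

namespace GaussAux

variable {Ω : Type} [MeasurableSpace Ω] {P : Measure Ω} [IsProbabilityMeasure P]
variable {A B C : Ω → ℝ} {va vc : ℝ≥0}

lemma pow_int (hA : Measurable A) (hlaw : P.map A = gaussianReal 0 va) (hva : va ≠ 0) (k : ℕ) :
    Integrable (fun ω => A ω ^ k) P := by
  have h := integrable_map_measure (μ := P) (f := A) (g := fun x : ℝ => x ^ k)
    (measurable_id.pow_const k).aestronglyMeasurable hA.aemeasurable
  rw [hlaw] at h
  exact h.mp (integrable_pow_gaussianReal hva k)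

lemma pow_exp (hA : Measurable A) (hlaw : P.map A = gaussianReal 0 va) (k : ℕ) :
    ∫ ω, A ω ^ k ∂P = ∫ x, x ^ k ∂(gaussianReal 0 va) := by
  rw [← hlaw]
  exact (integral_map hA.aemeasurable (measurable_id.pow_const k).aestronglyMeasurable).symm

/-- Expectation and integrability of a monomial in three independent Gaussians. -/
lemma monomial (hA : Measurable A) (hB : Measurable B) (hC : Measurable C)
    (hlA : P.map A = gaussianReal 0 va) (hlB : P.map B = gaussianReal 0 va)
    (hlC : P.map C = gaussianReal 0 vc) (hva : va ≠ 0) (hvc : vc ≠ 0)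
    (hAB : IndepFun A B P) (hABC : IndepFun (fun ω => (A ω, B ω)) C P)
    (p q r : ℕ) :
    Integrable (fun ω => A ω ^ p * B ω ^ q * C ω ^ r) P ∧
    ∫ ω, A ω ^ p * B ω ^ q * C ω ^ r ∂P
      = (∫ x, x ^ p ∂(gaussianReal 0 va)) * (∫ x, x ^ q ∂(gaussianReal 0 va))
        * (∫ x, x ^ r ∂(gaussianReal 0 vc)) := by
  have hABpow : IndepFun (fun ω => A ω ^ p) (fun ω => B ω ^ q) P :=
    hAB.comp (measurable_id.pow_const p) (measurable_id.pow_const q)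
  have hiA := pow_int hA hlA hva p
  have hiB := pow_int hB hlB hva q
  have hiC := pow_int hC hlC hvc r
  have hiAB : Integrable (fun ω => A ω ^ p * B ω ^ q) P :=
    hABpow.integrable_mul hiA hiB
  have hABCpow : IndepFun (fun ω => A ω ^ p * B ω ^ q) (fun ω => C ω ^ r) P :=
    hABC.comp (((measurable_fst.pow_const p).mul (measurable_snd.pow_const q)))
      (measurable_id.pow_const r)
  refine ⟨hABCpow.integrable_mul hiAB hiC, ?_⟩
  rw [show (fun ω => A ω ^ p * B ω ^ q * C ω ^ r)
      = (fun ω => A ω ^ p * B ω ^ q) * (fun ω => C ω ^ r) from rfl]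
  rw [hABCpow.integral_mul_eq_mul_integral hiAB.aestronglyMeasurable hiC.aestronglyMeasurable]
  rw [show (fun ω => A ω ^ p * B ω ^ q)
      = (fun ω => A ω ^ p) * (fun ω => B ω ^ q) from rfl]
  rw [hABpow.integral_mul_eq_mul_integral hiA.aestronglyMeasurable hiB.aestronglyMeasurable]
  rw [pow_exp hA hlA, pow_exp hB hlB, pow_exp hC hlC]

variable (a b : ℝ)

/-- All the statistics of one coordinate term `(a A + b C)(B - A)`. -/
lemma Vstat (hA : Measurable A) (hB : Measurable B) (hC : Measurable C)
    (hlA : P.map A = gaussianReal 0 va) (hlB : P.map B = gaussianReal 0 va)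
    (hlC : P.map C = gaussianReal 0 vc) (hva : va ≠ 0) (hvc : vc ≠ 0)
    (hAB : IndepFun A B P) (hABC : IndepFun (fun ω => (A ω, B ω)) C P) :
    Integrable (fun ω => (a * A ω + b * C ω) * (B ω - A ω)) P ∧
    ∫ ω, (a * A ω + b * C ω) * (B ω - A ω) ∂P = -(a * va) ∧
    MemLp (fun ω => (a * A ω + b * C ω) * (B ω - A ω)) 2 P ∧
    variance (fun ω => (a * A ω + b * C ω) * (B ω - A ω)) P
      = 3 * a^2 * (va:ℝ)^2 + 2 * b^2 * (va:ℝ) * (vc:ℝ) := by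
  have M := monomial hA hB hC hlA hlB hlC hva hvc hAB hABC
  -- expectation of V
  have hVeq : (fun ω => (a * A ω + b * C ω) * (B ω - A ω))
      = fun ω => a * (A ω ^ 1 * B ω ^ 1 * C ω ^ 0) - a * (A ω ^ 2 * B ω ^ 0 * C ω ^ 0)
          + b * (A ω ^ 0 * B ω ^ 1 * C ω ^ 1) - b * (A ω ^ 1 * B ω ^ 0 * C ω ^ 1) := by
    funext ω; ring
  have i110 := (M 1 1 0).1.const_mul a
  have i200 := (M 2 0 0).1.const_mul a
  have i011 := (M 0 1 1).1.const_mul b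
  have i101 := (M 1 0 1).1.const_mul b
  have hVint : Integrable (fun ω => (a * A ω + b * C ω) * (B ω - A ω)) P := by
    rw [hVeq]; exact ((i110.sub i200).add i011).sub i101
  have s2 : Integrable (fun ω => a * (A ω ^ 1 * B ω ^ 1 * C ω ^ 0)
      - a * (A ω ^ 2 * B ω ^ 0 * C ω ^ 0)) P := i110.sub i200
  have s3 : Integrable (fun ω => a * (A ω ^ 1 * B ω ^ 1 * C ω ^ 0)
      - a * (A ω ^ 2 * B ω ^ 0 * C ω ^ 0) + b * (A ω ^ 0 * B ω ^ 1 * C ω ^ 1)) P := s2.add i011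
  have hVexp : ∫ ω, (a * A ω + b * C ω) * (B ω - A ω) ∂P = -(a * va) := by
    rw [hVeq, integral_sub s3 i101,
      integral_add s2 i011, integral_sub i110 i200,
      integral_const_mul, integral_const_mul, integral_const_mul, integral_const_mul,
      (M 1 1 0).2, (M 2 0 0).2, (M 0 1 1).2, (M 1 0 1).2,
      gmom1 hva, gmom2 hva, gmom1 hvc]
    simp
  -- second moment
  have hV2eq : (fun ω => ((a * A ω + b * C ω) * (B ω - A ω)) ^ 2)
      = fun ω => a^2 * (A ω ^ 2 * B ω ^ 2 * C ω ^ 0) + a^2 * (A ω ^ 4 * B ω ^ 0 * C ω ^ 0)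
          + b^2 * (A ω ^ 0 * B ω ^ 2 * C ω ^ 2) + b^2 * (A ω ^ 2 * B ω ^ 0 * C ω ^ 2)
          + (-(2*a^2)) * (A ω ^ 3 * B ω ^ 1 * C ω ^ 0) + (2*a*b) * (A ω ^ 1 * B ω ^ 2 * C ω ^ 1)
          + (-(4*a*b)) * (A ω ^ 2 * B ω ^ 1 * C ω ^ 1) + (2*a*b) * (A ω ^ 3 * B ω ^ 0 * C ω ^ 1)
          + (-(2*b^2)) * (A ω ^ 1 * B ω ^ 1 * C ω ^ 2) := by
    funext ω; ring
  have j1 := (M 2 2 0).1.const_mul (a^2)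
  have j2 := (M 4 0 0).1.const_mul (a^2)
  have j3 := (M 0 2 2).1.const_mul (b^2)
  have j4 := (M 2 0 2).1.const_mul (b^2)
  have j5 := (M 3 1 0).1.const_mul (-(2*a^2))
  have j6 := (M 1 2 1).1.const_mul (2*a*b)
  have j7 := (M 2 1 1).1.const_mul (-(4*a*b))
  have j8 := (M 3 0 1).1.const_mul (2*a*b)
  have j9 := (M 1 1 2).1.const_mul (-(2*b^2))
  have hV2int : Integrable (fun ω => ((a * A ω + b * C ω) * (B ω - A ω)) ^ 2) P := by
    rw [hV2eq]
    exact ((((((((j1.add j2).add j3).add j4).add j5).add j6).add j7).add j8).add j9)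
  have hV2exp : ∫ ω, ((a * A ω + b * C ω) * (B ω - A ω)) ^ 2 ∂P
      = 4 * a^2 * (va:ℝ)^2 + 2 * b^2 * (va:ℝ) * (vc:ℝ) := by
    have S2 : Integrable (fun ω => a^2 * (A ω ^ 2 * B ω ^ 2 * C ω ^ 0) + a^2 * (A ω ^ 4 * B ω ^ 0 * C ω ^ 0)) P := j1.add j2
    have S3 : Integrable (fun ω => a^2 * (A ω ^ 2 * B ω ^ 2 * C ω ^ 0) + a^2 * (A ω ^ 4 * B ω ^ 0 * C ω ^ 0) + b^2 * (A ω ^ 0 * B ω ^ 2 * C ω ^ 2)) P := S2.add j3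
    have S4 : Integrable (fun ω => a^2 * (A ω ^ 2 * B ω ^ 2 * C ω ^ 0) + a^2 * (A ω ^ 4 * B ω ^ 0 * C ω ^ 0) + b^2 * (A ω ^ 0 * B ω ^ 2 * C ω ^ 2) + b^2 * (A ω ^ 2 * B ω ^ 0 * C ω ^ 2)) P := S3.add j4
    have S5 : Integrable (fun ω => a^2 * (A ω ^ 2 * B ω ^ 2 * C ω ^ 0) + a^2 * (A ω ^ 4 * B ω ^ 0 * C ω ^ 0) + b^2 * (A ω ^ 0 * B ω ^ 2 * C ω ^ 2) + b^2 * (A ω ^ 2 * B ω ^ 0 * C ω ^ 2) + (-(2*a^2)) * (A ω ^ 3 * B ω ^ 1 * C ω ^ 0)) P := S4.add j5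
    have S6 : Integrable (fun ω => a^2 * (A ω ^ 2 * B ω ^ 2 * C ω ^ 0) + a^2 * (A ω ^ 4 * B ω ^ 0 * C ω ^ 0) + b^2 * (A ω ^ 0 * B ω ^ 2 * C ω ^ 2) + b^2 * (A ω ^ 2 * B ω ^ 0 * C ω ^ 2) + (-(2*a^2)) * (A ω ^ 3 * B ω ^ 1 * C ω ^ 0) + (2*a*b) * (A ω ^ 1 * B ω ^ 2 * C ω ^ 1)) P := S5.add j6
    have S7 : Integrable (fun ω => a^2 * (A ω ^ 2 * B ω ^ 2 * C ω ^ 0) + a^2 * (A ω ^ 4 * B ω ^ 0 * C ω ^ 0) + b^2 * (A ω ^ 0 * B ω ^ 2 * C ω ^ 2) + b^2 * (A ω ^ 2 * B ω ^ 0 * C ω ^ 2) + (-(2*a^2)) * (A ω ^ 3 * B ω ^ 1 * C ω ^ 0) + (2*a*b) * (A ω ^ 1 * B ω ^ 2 * C ω ^ 1) + (-(4*a*b)) * (A ω ^ 2 * B ω ^ 1 * C ω ^ 1)) P := S6.add j7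
    have S8 : Integrable (fun ω => a^2 * (A ω ^ 2 * B ω ^ 2 * C ω ^ 0) + a^2 * (A ω ^ 4 * B ω ^ 0 * C ω ^ 0) + b^2 * (A ω ^ 0 * B ω ^ 2 * C ω ^ 2) + b^2 * (A ω ^ 2 * B ω ^ 0 * C ω ^ 2) + (-(2*a^2)) * (A ω ^ 3 * B ω ^ 1 * C ω ^ 0) + (2*a*b) * (A ω ^ 1 * B ω ^ 2 * C ω ^ 1) + (-(4*a*b)) * (A ω ^ 2 * B ω ^ 1 * C ω ^ 1) + (2*a*b) * (A ω ^ 3 * B ω ^ 0 * C ω ^ 1)) P := S7.add j8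
    rw [hV2eq,
      integral_add S8 j9, integral_add S7 j8, integral_add S6 j7, integral_add S5 j6,
      integral_add S4 j5, integral_add S3 j4, integral_add S2 j3, integral_add j1 j2]
    simp only [integral_const_mul]
    rw [(M 2 2 0).2, (M 4 0 0).2, (M 0 2 2).2, (M 2 0 2).2, (M 3 1 0).2, (M 1 2 1).2,
      (M 2 1 1).2, (M 3 0 1).2, (M 1 1 2).2,
      gmom1 hva, gmom2 hva, gmom3 hva, gmom4 hva, gmom1 hvc, gmom2 hvc]
    simp
    ring
  have hVmeas : Measurable (fun ω => (a * A ω + b * C ω) * (B ω - A ω)) :=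
    (((hA.const_mul a).add (hC.const_mul b)).mul (hB.sub hA))
  have hVmem : MemLp (fun ω => (a * A ω + b * C ω) * (B ω - A ω)) 2 P := by
    rw [memLp_two_iff_integrable_sq hVmeas.aestronglyMeasurable]
    exact hV2int
  refine ⟨hVint, hVexp, hVmem, ?_⟩
  rw [variance_eq_sub hVmem]
  have : (fun ω => (a * A ω + b * C ω) * (B ω - A ω)) ^ 2
      = fun ω => ((a * A ω + b * C ω) * (B ω - A ω)) ^ 2 := rfl
  rw [this, hV2exp]
  have h2 : ∫ ω, (fun ω => (a * A ω + b * C ω) * (B ω - A ω)) ω ∂P = -(a * (va:ℝ)) := hVexp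
  rw [show P[fun ω => (a * A ω + b * C ω) * (B ω - A ω)] = -(a * (va:ℝ)) from hVexp]
  ring

end GaussAux

end Aux

open scoped NNReal ENNReal in
set_option maxHeartbeats 2000000 in
/-- The log-softmax term of the loss at the true token,
`log(1 + Σ_{i ≠ y} exp(⟪z_t, e_i⟫ − ⟪z_t, e_y⟫))`, vanishes in probability in the joint
limit `β̄ → 0`, `d → ∞`. -/
theorem log_softmax_term_tendsto_zero_in_probability
    (σe : ℝ) (hσe : 0 < σe) (V : ℕ) (hV : 2 ≤ V) (y : Fin V)
    (η δ : ℝ) (hη : 0 < η) (hδ : 0 < δ) :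
    ∃ βb₀ : ℝ, 0 < βb₀ ∧ ∃ d₀ : ℕ,
      ∀ (βb : ℝ), 0 < βb → βb < βb₀ → βb < 1 →
      ∀ (d : ℕ), d₀ ≤ d →
      ∀ (Ω : Type) (_ : MeasurableSpace Ω) (P : Measure Ω), IsProbabilityMeasure P →
      ∀ (e : Fin V → Ω → Fin d → ℝ) (ε : Ω → Fin d → ℝ),
        (∀ k j, Measurable fun ω => e k ω j) →
        (∀ j, Measurable fun ω => ε ω j) →
        (∀ k j, P.map (fun ω => e k ω j) = gaussianReal 0 (Real.toNNReal (σe ^ 2))) →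
        (∀ j, P.map (fun ω => ε ω j) = gaussianReal 0 1) →
        iIndepFun (m := fun _ => Real.measurableSpace)
          (Sum.elim (fun (p : Fin V × Fin d) (ω : Ω) => e p.1 ω p.2)
            (fun (j : Fin d) (ω : Ω) => ε ω j)) P →
        ENNReal.ofReal (1 - δ) <
          P {ω | Real.log (1 + ∑ i ∈ Finset.univ.erase y,
              Real.exp (edot (noised βb (e y ω) (ε ω)) (e i ω)
                - edot (noised βb (e y ω) (ε ω)) (e y ω))) < η} := by
  classical
  -- basic constants
  set σ2 : ℝ := σe ^ 2 with hσ2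
  have hσ2pos : 0 < σ2 := by positivity
  set c : ℝ := Real.log ((Real.exp η - 1) / V) with hc
  set K₁ : ℝ := 3 * σ2 ^ 2 + 2 * σ2 with hK₁
  have hK₁pos : 0 < K₁ := by positivity
  set δ' : ℝ := min δ 1 with hδ'
  have hδ'pos : 0 < δ' := lt_min hδ one_pos
  have hδ'le1 : δ' ≤ 1 := min_le_right _ _
  set R : ℝ := 16 * V * K₁ / σ2 ^ 2 with hR
  have hRpos : 0 < R := by positivity
  refine ⟨1/2, by norm_num, ⌈max (4 * |c| / σ2) (2 * R / δ')⌉₊ + 1, ?_⟩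
  intro βb hβb0 hβbhalf hβb1 d hd Ω mΩ P hP e ε he hε hle hlε hindep
  have hd1 : 1 ≤ d := le_trans (Nat.le_add_left 1 _) hd
  have hdpos : (0:ℝ) < d := by exact_mod_cast Nat.lt_of_lt_of_le Nat.zero_lt_one hd1
  have hdc : 4 * |c| / σ2 ≤ d := by
    calc 4 * |c| / σ2 ≤ max (4 * |c| / σ2) (2 * R / δ') := le_max_left _ _
      _ ≤ ⌈max (4 * |c| / σ2) (2 * R / δ')⌉₊ := Nat.le_ceil _
      _ ≤ d := by exact_mod_cast le_trans (Nat.le_succ _) hd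
  have hdR : 2 * R / δ' ≤ d := by
    calc 2 * R / δ' ≤ max (4 * |c| / σ2) (2 * R / δ') := le_max_right _ _
      _ ≤ ⌈max (4 * |c| / σ2) (2 * R / δ')⌉₊ := Nat.le_ceil _
      _ ≤ d := by exact_mod_cast le_trans (Nat.le_succ _) hd
  -- a and b
  set a : ℝ := Real.sqrt (1 - βb) with ha
  set b : ℝ := Real.sqrt βb with hb
  have ha2 : a ^ 2 = 1 - βb := Real.sq_sqrt (by linarith)
  have hb2 : b ^ 2 = βb := Real.sq_sqrt hβb0.le
  have ha0 : 0 ≤ a := Real.sqrt_nonneg _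
  have ha1 : a ≤ 1 := by
    rw [ha]
    calc Real.sqrt (1 - βb) ≤ Real.sqrt 1 := Real.sqrt_le_sqrt (by linarith)
      _ = 1 := Real.sqrt_one
  have hahalf : 1/2 ≤ a := by nlinarith [ha2]
  -- variance parameters
  set va : ℝ≥0 := Real.toNNReal σ2 with hva
  have hva0 : va ≠ 0 := by
    rw [hva, Ne, Real.toNNReal_eq_zero]
    linarith
  have hvaR : (va : ℝ) = σ2 := Real.coe_toNNReal _ hσ2pos.le
  -- index type and family
  set ι := (Fin V × Fin d) ⊕ (Fin d) with hι
  set F : ι → Ω → ℝ := Sum.elim (fun (p : Fin V × Fin d) (ω : Ω) => e p.1 ω p.2)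
      (fun (j : Fin d) (ω : Ω) => ε ω j) with hF
  have hFmeas : ∀ x : ι, Measurable (F x) := by
    rintro (p | j)
    · exact he p.1 p.2
    · exact hε j
  -- the per-coordinate statistics, for each i ≠ y and j
  have key : ∀ i : Fin V, i ≠ y → ∀ j : Fin d,
      Integrable (fun ω => (a * e y ω j + b * ε ω j) * (e i ω j - e y ω j)) P ∧
      ∫ ω, (a * e y ω j + b * ε ω j) * (e i ω j - e y ω j) ∂P = -(a * σ2) ∧
      MemLp (fun ω => (a * e y ω j + b * ε ω j) * (e i ω j - e y ω j)) 2 P ∧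
      variance (fun ω => (a * e y ω j + b * ε ω j) * (e i ω j - e y ω j)) P
        = 3 * a^2 * σ2^2 + 2 * b^2 * σ2 := by
    intro i hiy j
    have hne1 : (Sum.inl (y,j) : ι) ≠ Sum.inl (i,j) := by
      intro h
      injection h with h'
      exact hiy.symm (congrArg Prod.fst h')
    have hAB : IndepFun (fun ω => e y ω j) (fun ω => e i ω j) P :=
      hindep.indepFun hne1
    have hABC : IndepFun (fun ω => (e y ω j, e i ω j)) (fun ω => ε ω j) P :=
      hindep.indepFun_prodMk hFmeas (Sum.inl (y,j)) (Sum.inl (i,j)) (Sum.inr j)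
        (by simp) (by simp)
    have st := GaussAux.Vstat (P := P) (va := va) (vc := 1) a b
      (he y j) (he i j) (hε j) (hle y j) (hle i j) (hlε j) hva0 one_ne_zero hAB hABC
    refine ⟨st.1, ?_, st.2.2.1, ?_⟩
    · rw [st.2.1, hvaR]
    · rw [st.2.2.2, hvaR]
      norm_num
  -- pairwise independence of coordinates
  have pairind : ∀ i : Fin V, ∀ j k : Fin d, j ≠ k →
      IndepFun (fun ω => (a * e y ω j + b * ε ω j) * (e i ω j - e y ω j))
        (fun ω => (a * e y ω k + b * ε ω k) * (e i ω k - e y ω k)) P := by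
    intro i j k hjk
    set S : Finset ι := {Sum.inl (y,j), Sum.inl (i,j), Sum.inr j} with hS
    set T : Finset ι := {Sum.inl (y,k), Sum.inl (i,k), Sum.inr k} with hT
    have hdisj : Disjoint S T := by
      rw [Finset.disjoint_left]
      intro x hx hx'
      rw [hS, Finset.mem_insert, Finset.mem_insert, Finset.mem_singleton] at hx
      rw [hT, Finset.mem_insert, Finset.mem_insert, Finset.mem_singleton] at hx'
      rcases hx with h | h | h <;> rcases hx' with h' | h' | h' <;>
        · rw [h] at h'
          first
          | (injection h' with h''; exact hjk (congrArg Prod.snd h''))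
          | (injection h'' )
          | exact hjk (Sum.inr.inj h')
          | exact Sum.inl_ne_inr h'
          | exact Sum.inr_ne_inl h'
          | (injection h' with h''; exact hjk h'')
    have base := hindep.indepFun_finset S T hdisj hFmeas
    have hmem1 : (Sum.inl (y,j) : ι) ∈ S := by simp [hS]
    have hmem2 : (Sum.inl (i,j) : ι) ∈ S := by simp [hS]
    have hmem3 : (Sum.inr j : ι) ∈ S := by simp [hS]
    have hmem1' : (Sum.inl (y,k) : ι) ∈ T := by simp [hT]
    have hmem2' : (Sum.inl (i,k) : ι) ∈ T := by simp [hT]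
    have hmem3' : (Sum.inr k : ι) ∈ T := by simp [hT]
    have hφ : Measurable (fun g : (x : S) → ℝ =>
        (a * g ⟨_, hmem1⟩ + b * g ⟨_, hmem3⟩) * (g ⟨_, hmem2⟩ - g ⟨_, hmem1⟩)) := by
      fun_prop
    have hψ : Measurable (fun g : (x : T) → ℝ =>
        (a * g ⟨_, hmem1'⟩ + b * g ⟨_, hmem3'⟩) * (g ⟨_, hmem2'⟩ - g ⟨_, hmem1'⟩)) := by
      fun_prop
    exact base.comp hφ hψ
  -- measurability of the coordinate sums
  have hXmeas : ∀ i : Fin V, Measurable (fun ω =>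
      ∑ j, (a * e y ω j + b * ε ω j) * (e i ω j - e y ω j)) := by
    intro i
    apply Finset.measurable_sum
    intro j _
    exact (((he y j).const_mul a).add ((hε j).const_mul b)).mul ((he i j).sub (he y j))
  -- Chebyshev bound for each i ≠ y
  have main : ∀ i : Fin V, i ≠ y →
      P {ω | c ≤ ∑ j, (a * e y ω j + b * ε ω j) * (e i ω j - e y ω j)}
        ≤ ENNReal.ofReal (16 * K₁ / (σ2^2 * d)) := by
    intro i hiy
    set W : Fin d → Ω → ℝ := fun j ω => (a * e y ω j + b * ε ω j) * (e i ω j - e y ω j) with hW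
    have hWint : ∀ j, Integrable (W j) P := fun j => (key i hiy j).1
    have hWexp : ∀ j, ∫ ω, W j ω ∂P = -(a * σ2) := fun j => (key i hiy j).2.1
    have hWmem : ∀ j, MemLp (W j) 2 P := fun j => (key i hiy j).2.2.1
    have hWvar : ∀ j, variance (W j) P = 3*a^2*σ2^2 + 2*b^2*σ2 := fun j => (key i hiy j).2.2.2
    have hXmem : MemLp (fun ω => ∑ j, W j ω) 2 P := by
      have h := memLp_finsetSum' (μ := P) Finset.univ (f := W) (fun j _ => hWmem j)
      have he2 : (∑ j : Fin d, W j) = fun ω => ∑ j, W j ω := by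
        funext ω; simp [Finset.sum_apply]
      rwa [he2] at h
    have hXexp : ∫ ω, ∑ j, W j ω ∂P = -(a * σ2 * d) := by
      rw [integral_finset_sum _ (fun j _ => hWint j)]
      simp only [hWexp, Finset.sum_const, Finset.card_univ, Fintype.card_fin, nsmul_eq_mul]
      ring
    have hXvar : variance (fun ω => ∑ j, W j ω) P = d * (3*a^2*σ2^2 + 2*b^2*σ2) := by
      have hpair : Set.Pairwise ↑(Finset.univ : Finset (Fin d))
          (fun j k => IndepFun (W j) (W k) P) := fun j _ k _ hjk => pairind i j k hjk
      have h := IndepFun.variance_sum (μ := P) (X := W) (s := Finset.univ)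
        (fun j _ => hWmem j) hpair
      have he2 : (∑ j : Fin d, W j) = fun ω => ∑ j, W j ω := by
        funext ω; simp [Finset.sum_apply]
      rw [he2] at h
      rw [h]
      simp only [hWvar, Finset.sum_const, Finset.card_univ, Fintype.card_fin, nsmul_eq_mul]
    -- threshold
    set t : ℝ := c + a * σ2 * d with ht
    have hcsmall : |c| ≤ σ2 * d / 4 := by
      have := (div_le_iff₀ hσ2pos).mp hdc
      linarith
    have htlow : σ2 * d / 4 ≤ t := by
      have h1 : (1/2) * (σ2 * d) ≤ a * σ2 * d := by nlinarith [mul_le_mul_of_nonneg_right hahalf (mul_nonneg hσ2pos.le hdpos.le)]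
      have h2 : -(σ2 * d / 4) ≤ c := by
        have := neg_abs_le c
        linarith
      rw [ht]; linarith
    have htpos : 0 < t := lt_of_lt_of_le (by positivity) htlow
    have cheb := meas_ge_le_variance_div_sq (μ := P) hXmem htpos
    have hsub1 : {ω | c ≤ ∑ j, W j ω}
        ⊆ {ω | t ≤ |(∑ j, W j ω) - ∫ ω', (∑ j, W j ω') ∂P|} := by
      intro ω hω
      simp only [Set.mem_setOf_eq] at hω ⊢
      rw [hXexp]
      have : t ≤ (∑ j, W j ω) - -(a * σ2 * d) := by rw [ht]; linarith
      exact this.trans (le_abs_self _)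
    have hvarle : variance (fun ω => ∑ j, W j ω) P / t^2 ≤ 16 * K₁ / (σ2^2 * d) := by
      have h1 : variance (fun ω => ∑ j, W j ω) P ≤ d * K₁ := by
        rw [hXvar, hK₁]
        have : 3*a^2*σ2^2 + 2*b^2*σ2 ≤ 3*σ2^2 + 2*σ2 := by nlinarith [ha2, hb2]
        nlinarith
      have h2 : (σ2 * d / 4)^2 ≤ t^2 := by
        apply pow_le_pow_left₀ (by positivity) htlow
      have h3 : variance (fun ω => ∑ j, W j ω) P / t^2 ≤ (d * K₁) / ((σ2 * d / 4)^2) :=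
        div_le_div₀ (by positivity) h1 (by positivity) h2
      have h4 : (d * K₁) / ((σ2 * d / 4)^2) = 16 * K₁ / (σ2^2 * d) := by
        field_simp
        ring
      rw [h4] at h3
      exact h3
    calc P {ω | c ≤ ∑ j, W j ω}
        ≤ P {ω | t ≤ |(∑ j, W j ω) - ∫ ω', (∑ j, W j ω') ∂P|} := measure_mono hsub1
      _ ≤ ENNReal.ofReal (variance (fun ω => ∑ j, W j ω) P / t^2) := cheb
      _ ≤ ENNReal.ofReal (16 * K₁ / (σ2^2 * d)) := ENNReal.ofReal_le_ofReal hvarle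
  -- the bad event
  haveI := hP
  set Bad : Set Ω := ⋃ i ∈ Finset.univ.erase y,
      {ω | c ≤ ∑ j, (a * e y ω j + b * ε ω j) * (e i ω j - e y ω j)} with hBad
  have hBadmeas : MeasurableSet Bad :=
    Finset.measurableSet_biUnion _ (fun i _ => measurableSet_le measurable_const (hXmeas i))
  have hcard : ((Finset.univ.erase y).card : ℝ≥0∞) ≤ (V : ℝ≥0∞) := by
    have h1 : (Finset.univ.erase y).card ≤ V := by
      calc (Finset.univ.erase y).card ≤ (Finset.univ : Finset (Fin V)).card :=
            Finset.card_le_card (Finset.erase_subset _ _)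
        _ = V := by simp
    exact_mod_cast h1
  have hBadbound : P Bad ≤ ENNReal.ofReal (R / d) := by
    calc P Bad ≤ ∑ i ∈ Finset.univ.erase y,
          P {ω | c ≤ ∑ j, (a * e y ω j + b * ε ω j) * (e i ω j - e y ω j)} :=
        measure_biUnion_finset_le _ _
      _ ≤ ∑ _i ∈ Finset.univ.erase y, ENNReal.ofReal (16 * K₁ / (σ2^2 * d)) :=
        Finset.sum_le_sum (fun i hi => main i (Finset.mem_erase.mp hi).1)
      _ = ((Finset.univ.erase y).card) • ENNReal.ofReal (16 * K₁ / (σ2^2 * d)) :=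
        Finset.sum_const _
      _ ≤ (V : ℝ≥0∞) * ENNReal.ofReal (16 * K₁ / (σ2^2 * d)) := by
          rw [nsmul_eq_mul]
          exact mul_le_mul_left hcard _
      _ = ENNReal.ofReal (R / d) := by
          rw [← ENNReal.ofReal_natCast V, ← ENNReal.ofReal_mul (by positivity)]
          congr 1
          rw [hR]
          field_simp
  have hRd : R / d ≤ δ' / 2 := by
    have h1 : 2 * R ≤ d * δ' := by
      have := (div_le_iff₀ hδ'pos).mp hdR
      linarith
    rw [div_le_div_iff₀ hdpos (by norm_num : (0:ℝ) < 2)]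
    linarith
  -- the good event contains the complement of Bad
  have hsub : Badᶜ ⊆ {ω | Real.log (1 + ∑ i ∈ Finset.univ.erase y,
      Real.exp (edot (noised βb (e y ω) (ε ω)) (e i ω)
        - edot (noised βb (e y ω) (ε ω)) (e y ω))) < η} := by
    intro ω hω
    simp only [hBad, Set.mem_compl_iff, Set.mem_iUnion, Set.mem_setOf_eq, not_exists,
      not_le] at hω
    simp only [Set.mem_setOf_eq]
    have hVpos : (0:ℝ) < V := by
      have : (2:ℝ) ≤ V := by exact_mod_cast hV
      linarith
    have hexpη : 1 < Real.exp η := by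
      rw [← Real.exp_zero]
      exact Real.exp_lt_exp.mpr hη
    have hq : 0 < (Real.exp η - 1) / V := by
      apply div_pos (by linarith) hVpos
    have hlt : ∀ i ∈ Finset.univ.erase y,
        Real.exp (edot (noised βb (e y ω) (ε ω)) (e i ω)
          - edot (noised βb (e y ω) (ε ω)) (e y ω)) < (Real.exp η - 1) / V := by
      intro i hi
      have hrepr : edot (noised βb (e y ω) (ε ω)) (e i ω)
          - edot (noised βb (e y ω) (ε ω)) (e y ω)
          = ∑ j, (a * e y ω j + b * ε ω j) * (e i ω j - e y ω j) := by
        simp only [edot, noised, ← Finset.sum_sub_distrib]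
        apply Finset.sum_congr rfl
        intro j _
        ring
      calc Real.exp (edot (noised βb (e y ω) (ε ω)) (e i ω)
              - edot (noised βb (e y ω) (ε ω)) (e y ω))
          < Real.exp c := by
            apply Real.exp_lt_exp.mpr
            rw [hrepr]
            exact hω i hi
        _ = (Real.exp η - 1) / V := Real.exp_log hq
    have hne : (Finset.univ.erase y).Nonempty := by
      rw [← Finset.card_pos, Finset.card_erase_of_mem (Finset.mem_univ y)]
      simp only [Finset.card_univ, Fintype.card_fin]
      omega
    have hsum : ∑ i ∈ Finset.univ.erase y,
        Real.exp (edot (noised βb (e y ω) (ε ω)) (e i ω)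
          - edot (noised βb (e y ω) (ε ω)) (e y ω))
        < ∑ _i ∈ Finset.univ.erase y, (Real.exp η - 1) / V :=
      Finset.sum_lt_sum_of_nonempty hne hlt
    have hcount : ((Finset.univ.erase y).card : ℝ) ≤ V := by
      have h1 : (Finset.univ.erase y).card ≤ V :=
        le_trans (Finset.card_le_card (Finset.erase_subset _ _)) (by simp)
      exact_mod_cast h1
    have hsum2 : ∑ _i ∈ Finset.univ.erase y, (Real.exp η - 1) / V < Real.exp η - 1 := by
      rw [Finset.sum_const, nsmul_eq_mul]
      have hcardlt : ((Finset.univ.erase y).card : ℝ) < V := by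
        rw [Finset.card_erase_of_mem (Finset.mem_univ y)]
        simp only [Finset.card_univ, Fintype.card_fin]
        have : (V - 1 : ℕ) < V := by omega
        exact_mod_cast this
      calc ((Finset.univ.erase y).card : ℝ) * ((Real.exp η - 1) / V)
          < V * ((Real.exp η - 1) / V) := by
            apply mul_lt_mul_of_pos_right hcardlt hq
        _ = Real.exp η - 1 := by field_simp
    have hpos : 0 < 1 + ∑ i ∈ Finset.univ.erase y,
        Real.exp (edot (noised βb (e y ω) (ε ω)) (e i ω)
          - edot (noised βb (e y ω) (ε ω)) (e y ω)) := by
      have : (0:ℝ) ≤ ∑ i ∈ Finset.univ.erase y,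
          Real.exp (edot (noised βb (e y ω) (ε ω)) (e i ω)
            - edot (noised βb (e y ω) (ε ω)) (e y ω)) :=
        Finset.sum_nonneg (fun i _ => (Real.exp_pos _).le)
      linarith
    rw [Real.log_lt_iff_lt_exp hpos]
    linarith
  -- final chain
  calc ENNReal.ofReal (1 - δ)
      ≤ ENNReal.ofReal (1 - δ') := by
        apply ENNReal.ofReal_le_ofReal
        have : δ' ≤ δ := min_le_left _ _
        linarith
    _ < ENNReal.ofReal (1 - δ'/2) := by
        rw [ENNReal.ofReal_lt_ofReal_iff (by linarith)]
        linarith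
    _ = 1 - ENNReal.ofReal (δ'/2) := by
        rw [ENNReal.ofReal_sub _ (by linarith), ENNReal.ofReal_one]
    _ ≤ 1 - ENNReal.ofReal (R/d) :=
        tsub_le_tsub_left (ENNReal.ofReal_le_ofReal hRd) 1
    _ ≤ 1 - P Bad := tsub_le_tsub_left hBadbound 1
    _ = P Badᶜ := (prob_compl_eq_one_sub hBadmeas).symm
    _ ≤ _ := measure_mono hsub
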